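/- Let M = img(t_L♯) ⊆ O^{A*}, a T-subalgebra of O^{A*}. Then: (i) for every m ∈ M and a ∈ A, the derivative (λv. m(av)) again belongs to M; (ii) the T-automaton M_L with state space M, initial state t_L(ε), output map out(m) = m(ε), and transition map δ(m)(a) = (λv. m(av)) is well defined (out and δ are T-algebra homomorphisms), and it accepts L: its observability map applied to its initial state equals L. -/

import Mathlib

/-- A monad on the category of sets, given by an endofunctor `T` with unit `pure` (η)
and multiplication `mult` (μ), satisfying functoriality, naturality and the monad laws. -/
structure SetMonad where
  T : Type → Type
  map : {X Y : Type} → (X → Y) → T X → T Y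
  pure : {X : Type} → X → T X
  mult : {X : Type} → T (T X) → T X
  map_id : ∀ {X : Type} (t : T X), map id t = t
  map_comp : ∀ {X Y Z : Type} (g : Y → Z) (f : X → Y) (t : T X),
    map (g ∘ f) t = map g (map f t)
  pure_natural : ∀ {X Y : Type} (f : X → Y) (x : X), map f (pure x) = pure (f x)
  mult_natural : ∀ {X Y : Type} (f : X → Y) (t : T (T X)),
    map f (mult t) = mult (map (map f) t)
  mult_pure : ∀ {X : Type} (t : T X), mult (pure t) = t
  mult_map_pure : ∀ {X : Type} (t : T X), mult (map pure t) = t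
  mult_assoc : ∀ {X : Type} (t : T (T (T X))), mult (mult t) = mult (map mult t)

/-- An Eilenberg-Moore algebra `(carrier, str)` for the monad `M`. -/
structure AlgOver (M : SetMonad) where
  carrier : Type
  str : M.T carrier → carrier
  str_pure : ∀ x, str (M.pure x) = x
  str_mult : ∀ t, str (M.mult t) = str (M.map str t)

/-- `f` is a `T`-algebra homomorphism from `X` to `Y`: `f ∘ h = k ∘ T f`. -/
def IsHom (M : SetMonad) (X Y : AlgOver M) (f : X.carrier → Y.carrier) : Prop :=
  ∀ t : M.T X.carrier, f (X.str t) = Y.str (M.map f t)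

/-- The free `T`-algebra `(T U, μ_U)` on a set `U`. -/
def freeAlg (M : SetMonad) (U : Type) : AlgOver M where
  carrier := M.T U
  str := M.mult
  str_pure := M.mult_pure
  str_mult := M.mult_assoc

/-- The free `T`-extension `g♯ = v ∘ T g : T U → V` of a function `g : U → V`
into a `T`-algebra `(V, v)`. -/
def extAlg (M : SetMonad) {U : Type} (V : AlgOver M) (g : U → V.carrier) :
    M.T U → V.carrier :=
  fun t => V.str (M.map g t)

/-- The pointwise `T`-algebra structure on `V^A` for a `T`-algebra `V`. -/
def powAlg (M : SetMonad) (A : Type) (V : AlgOver M) : AlgOver M where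
  carrier := A → V.carrier
  str := fun t a => V.str (M.map (fun g => g a) t)
  str_pure := by
    intro x
    funext a
    show V.str (M.map (fun g => g a) (M.pure x)) = x a
    rw [M.pure_natural]
    exact V.str_pure _
  str_mult := by
    intro t
    funext a
    show V.str (M.map (fun g => g a) (M.mult t)) =
      V.str (M.map (fun g => g a) (M.map (fun t a => V.str (M.map (fun g => g a) t)) t))
    rw [M.mult_natural, V.str_mult, ← M.map_comp, ← M.map_comp]
    rfl

/-- The residual-language map `t_L : A* → O^{A*}`, `t_L(u)(v) = L(uv)`. -/
def tLang (A : Type) {Oc : Type} (L : List A → Oc) : List A → List A → Oc :=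
  fun u v => L (u ++ v)

/-- The free `T`-extension `t_L♯ : T(A*) → O^{A*}` of `t_L`. -/
def tLangS (M : SetMonad) (A : Type) (O : AlgOver M) (L : List A → O.carrier) :
    M.T (List A) → List A → O.carrier :=
  extAlg M (powAlg M (List A) O) (tLang A L)

lemma extAlg_mult (M : SetMonad) {U : Type} (V : AlgOver M) (g : U → V.carrier)
    (t : M.T (M.T U)) :
    extAlg M V g (M.mult t) = V.str (M.map (extAlg M V g) t) := by
  unfold extAlg
  rw [M.mult_natural, V.str_mult, ← M.map_comp]
  rfl

lemma tLangS_apply (M : SetMonad) (A : Type) (O : AlgOver M) (L : List A → O.carrier)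
    (t : M.T (List A)) (v : List A) :
    tLangS M A O L t v = O.str (M.map (fun u => L (u ++ v)) t) := by
  show O.str (M.map (fun g => g v) (M.map (tLang A L) t)) = _
  rw [← M.map_comp]
  rfl

lemma tLangS_deriv (M : SetMonad) (A : Type) (O : AlgOver M) (L : List A → O.carrier)
    (t : M.T (List A)) (a : A) :
    (fun v => tLangS M A O L t (a :: v))
      = tLangS M A O L (M.map (fun u => u ++ [a]) t) := by
  funext v
  rw [tLangS_apply, tLangS_apply, ← M.map_comp]
  have h : ((fun u => L (u ++ v)) ∘ fun u => u ++ [a]) = fun u => L (u ++ a :: v) := by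
    funext u; simp
  rw [h]


/-- the image `M = img(t_L♯) ⊆ O^{A*}` is closed under derivatives, and
the minimal `T`-automaton `M_L` on it (with initial state `t_L(ε)`, output `m(ε)` and
transitions `δ(m)(a) = λv. m(av)`) is well defined (its state space is a `T`-subalgebra
of `O^{A*}` and `out`, `δ` are `T`-algebra homomorphisms) and accepts `L`. -/
theorem stmt3 (M : SetMonad) (A : Type) [Finite A] (O : AlgOver M)
    (L : List A → O.carrier) :
    (∀ m ∈ Set.range (tLangS M A O L), ∀ a : A,
      (fun v => m (a :: v)) ∈ Set.range (tLangS M A O L)) ∧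
    ∃ (str : M.T ↥(Set.range (tLangS M A O L)) → ↥(Set.range (tLangS M A O L)))
      (δ : ↥(Set.range (tLangS M A O L)) → A → ↥(Set.range (tLangS M A O L)))
      (initmem : tLang A L [] ∈ Set.range (tLangS M A O L)),
      -- `str` is a `T`-algebra structure on `img(t_L♯)` …
      (∀ x, str (M.pure x) = x) ∧
      (∀ t, str (M.mult t) = str (M.map str t)) ∧
      -- … making the inclusion into `O^{A*}` a `T`-algebra homomorphism
      (∀ t, (str t).1 = (powAlg M (List A) O).str (M.map Subtype.val t)) ∧
      -- `δ` is the derivative transition map `δ(m)(a)(v) = m(av)` …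
      (∀ m a v, (δ m a).1 v = m.1 (a :: v)) ∧
      -- … and it is a `T`-algebra homomorphism into the pointwise power algebra
      (∀ t a, δ (str t) a = str (M.map (fun m => δ m a) t)) ∧
      -- the output map `out(m) = m(ε)` is a `T`-algebra homomorphism
      (∀ t, (str t).1 [] = O.str (M.map (fun m => m.1 []) t)) ∧
      -- the observability map applied to the initial state `t_L(ε)` equals `L`
      (∀ w : List A, (List.foldl δ ⟨tLang A L [], initmem⟩ w).1 [] = L w) := by

  classical
  set S := Set.range (tLangS M A O L) with hS
  -- lift: choose a preimage
  have lift_spec : ∀ m : ↥S, tLangS M A O L (Classical.choose m.2) = m.1 :=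
    fun m => Classical.choose_spec m.2
  set lift : ↥S → M.T (List A) := fun m => Classical.choose m.2 with hlift
  have hP := powAlg M (List A) O
  -- closure under str
  have str_mem : ∀ t : M.T ↥S,
      (powAlg M (List A) O).str (M.map Subtype.val t) ∈ S := by
    intro t
    refine ⟨M.mult (M.map lift t), ?_⟩
    rw [show tLangS M A O L = extAlg M (powAlg M (List A) O) (tLang A L) from rfl]
    refine (extAlg_mult M _ _ _).trans (congrArg (powAlg M (List A) O).str
      ((M.map_comp _ _ _).symm.trans ?_))
    have h : (extAlg M (powAlg M (List A) O) (tLang A L)) ∘ lift = Subtype.val := by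
      funext m; exact lift_spec m
    exact congrArg (fun f => M.map f t) h
  set str : M.T ↥S → ↥S :=
    fun t => ⟨(powAlg M (List A) O).str (M.map Subtype.val t), str_mem t⟩ with hstr
  -- closure under derivatives
  have deriv_mem : ∀ m ∈ S, ∀ a : A, (fun v => m (a :: v)) ∈ S := by
    rintro m ⟨t, rfl⟩ a
    exact ⟨M.map (fun u => u ++ [a]) t, (tLangS_deriv M A O L t a).symm⟩
  refine ⟨deriv_mem, str, fun m a => ⟨fun v => m.1 (a :: v), deriv_mem m.1 m.2 a⟩,
    ⟨M.pure [], ?_⟩, ?_, ?_, fun t => rfl, fun m a v => rfl, ?_, ?_, ?_⟩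
  · rw [show tLangS M A O L = extAlg M (powAlg M (List A) O) (tLang A L) from rfl]
    unfold extAlg
    exact (congrArg (powAlg M (List A) O).str (M.pure_natural (tLang A L) [])).trans
      ((powAlg M (List A) O).str_pure _)
  · intro x
    apply Subtype.ext
    show (powAlg M (List A) O).str (M.map Subtype.val (M.pure x)) = x.1
    exact (congrArg (powAlg M (List A) O).str (M.pure_natural Subtype.val x)).trans
      ((powAlg M (List A) O).str_pure _)
  · intro t
    apply Subtype.ext
    show (powAlg M (List A) O).str (M.map Subtype.val (M.mult t))
      = (powAlg M (List A) O).str (M.map Subtype.val (M.map str t))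
    exact (congrArg (powAlg M (List A) O).str (M.mult_natural Subtype.val t)).trans
      (((powAlg M (List A) O).str_mult _).trans (congrArg (powAlg M (List A) O).str
        ((M.map_comp (powAlg M (List A) O).str (M.map Subtype.val) t).symm.trans
          (M.map_comp Subtype.val str t))))
  · intro t a
    apply Subtype.ext
    funext v
    show (powAlg M (List A) O).str (M.map Subtype.val t) (a :: v)
      = (powAlg M (List A) O).str (M.map Subtype.val
          (M.map (fun m : ↥S => (⟨fun v => m.1 (a :: v), deriv_mem m.1 m.2 a⟩ : ↥S)) t)) v
    show O.str (M.map (fun g => g (a :: v)) (M.map Subtype.val t))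
      = O.str (M.map (fun g => g v) (M.map Subtype.val
          (M.map (fun m : ↥S => (⟨fun v => m.1 (a :: v), deriv_mem m.1 m.2 a⟩ : ↥S)) t)))
    rw [← M.map_comp, ← M.map_comp, ← M.map_comp]
    rfl
  · intro t
    show O.str (M.map (fun g => g []) (M.map Subtype.val t)) = _
    rw [← M.map_comp]
    rfl
  · intro w
    have key : ∀ (w : List A) (q : ↥S) (v : List A),
        (List.foldl (fun m a => (⟨fun v => m.1 (a :: v), deriv_mem m.1 m.2 a⟩ : ↥S)) q w).1 v
          = q.1 (w ++ v) := by
      intro w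
      induction w with
      | nil => intro q v; rfl
      | cons a w ih =>
        intro q v
        simp only [List.foldl_cons]
        rw [ih]
        rfl
    rw [key]
    show L (([] : List A) ++ (w ++ [])) = L w
    simp
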